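/- For binary trees T_1 ∈ Y_k and T_2 ∈ Y_l, the Loday–Ronco product Ψ*(T_1) * Ψ*(T_2) in the Malvenuto–Reutenauer algebra is a sum of elements Ψ*(T) over a multiset of trees T ∈ Y_{k+l}; that is, k[Y_∞] (identified with its image under Ψ*) is closed under the product *. -/

import Mathlib

open Equiv

/-- `σ` is the standardization of the tuple `u`: it preserves relative order. -/
def IsStd {k : ℕ} {α : Type*} [LinearOrder α] (u : Fin k → α) (σ : Equiv.Perm (Fin k)) : Prop :=
  ∀ i j, σ i < σ j ↔ u i < u j

/-- The permutation `σ|_A . τ|_B` (concatenation), where `B = Aᶜ`: the first `k` values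
are the elements of `A` arranged in the relative order prescribed by `σ`, and the last
`l` values are the elements of `Aᶜ` arranged in the relative order prescribed by `τ`. -/
def concatPerm {k l : ℕ} (σ : Equiv.Perm (Fin k)) (τ : Equiv.Perm (Fin l))
    (A : Finset (Fin (k + l))) (hA : A.card = k) : Equiv.Perm (Fin (k + l)) :=
  finSumFinEquiv.symm.trans
    ((Equiv.sumCongr (σ.trans (A.orderIsoOfFin hA).toEquiv)
        (τ.trans ((Aᶜ).orderIsoOfFin
          (by rw [Finset.card_compl, hA, Fintype.card_fin]; omega)).toEquiv)).trans
      ((Equiv.sumCongr (Equiv.refl _)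
          (Equiv.subtypeEquivRight (fun x => Finset.mem_compl))).trans
        (Equiv.sumCompl (· ∈ A))))

/-- The Malvenuto–Reutenauer product `σ * τ`, as the multiset of its summands:
`σ * τ = Σ_{A ⊔ B = {1,…,k+l}, |A| = k} σ|_A . τ|_B`. -/
def mrProd {k l : ℕ} (σ : Equiv.Perm (Fin k)) (τ : Equiv.Perm (Fin l)) :
    Multiset (Equiv.Perm (Fin (k + l))) :=
  (Finset.univ.filter (fun A : Finset (Fin (k + l)) => A.card = k)).attach.val.map
    (fun A => concatPerm σ τ A.1 (by have h := A.2; simp only [Finset.mem_filter] at h; exact h.2))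

/-- Auxiliary recursion (on a fuel bounding the length): the unlabeled binary tree of a
word of distinct integers, obtained by putting the position of the minimum at the root,
with left subtree built from the prefix before the minimum and right subtree from the
suffix after it. -/
def shapeOfAux : ℕ → List ℕ → Tree Unit
  | 0, _ => Tree.nil
  | fuel + 1, l =>
    if l = [] then Tree.nil
    else
      let m := l.min?.getD 0
      let i := l.idxOf m
      Tree.node () (shapeOfAux fuel (l.take i)) (shapeOfAux fuel (l.drop (i + 1)))

/-- The unlabeled binary tree underlying the increasing binary tree of a word. -/
def shapeOfList (l : List ℕ) : Tree Unit := shapeOfAux l.length l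

/-- `Ψ : S_n → Y_n` sends a permutation to the underlying unlabeled binary tree of its
increasing binary tree. -/
def Psi {n : ℕ} (σ : Equiv.Perm (Fin n)) : Tree Unit :=
  shapeOfList (List.ofFn fun i => (σ i : ℕ))

/-- `Ψ*(T) = Σ_{σ : Ψ(σ) = T} σ`, as the multiset of its summands. -/
def PsiStar (n : ℕ) (T : Tree Unit) : Multiset (Equiv.Perm (Fin n)) :=
  (Finset.univ.filter (fun σ : Equiv.Perm (Fin n) => Psi σ = T)).val

/-- The bilinear extension of the Malvenuto–Reutenauer product to formal sums
(multisets) of permutations. -/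
def mrProdSum {k l : ℕ} (s : Multiset (Equiv.Perm (Fin k))) (t : Multiset (Equiv.Perm (Fin l))) :
    Multiset (Equiv.Perm (Fin (k + l))) :=
  s.bind fun σ => t.bind fun τ => mrProd σ τ


section LodayRoncoAux

def minIdx (l : List ℕ) : ℕ := l.idxOf (l.min?.getD 0)

lemma min_spec {l : List ℕ} (h : l ≠ []) :
    l.min?.getD 0 ∈ l ∧ ∀ b ∈ l, l.min?.getD 0 ≤ b := by
  rcases hm : l.min? with _ | a
  · exact absurd (List.min?_eq_none_iff.1 hm) h
  · have := List.min?_eq_some_iff'.1 hm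
    simpa using this

lemma minIdx_lt {l : List ℕ} (h : l ≠ []) : minIdx l < l.length :=
  List.idxOf_lt_length_iff.2 (min_spec h).1

lemma getElem_minIdx {l : List ℕ} (h : l ≠ []) :
    l[minIdx l]'(minIdx_lt h) = l.min?.getD 0 :=
  List.getElem_idxOf _

lemma minIdx_le {l : List ℕ} (h : l ≠ []) {j : ℕ} (hj : j < l.length) :
    l[minIdx l]'(minIdx_lt h) ≤ l[j] := by
  rw [getElem_minIdx h]
  exact (min_spec h).2 _ (l.getElem_mem hj)

lemma indexOf_le_of_getElem {α : Type*} [DecidableEq α] {l : List α} {j : ℕ} (hj : j < l.length)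
    {a : α} (ha : l[j] = a) : l.idxOf a ≤ j := by
  induction l generalizing j with
  | nil => simp at hj
  | cons b t ih =>
    rcases j with _ | j
    · simp at ha; simp [ha, List.idxOf_cons_eq]
    · by_cases hb : b = a
      · simp [List.idxOf_cons_eq _ hb]
      · rw [List.idxOf_cons_ne _ hb]
        exact Nat.succ_le_succ (ih (Nat.lt_of_succ_lt_succ hj) ha)

lemma minIdx_lt_getElem {l : List ℕ} (h : l ≠ []) {j : ℕ} (hj : j < minIdx l) :
    l[minIdx l]'(minIdx_lt h) < l[j]'(hj.trans (minIdx_lt h)) := by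
  have hjl : j < l.length := hj.trans (minIdx_lt h)
  rcases lt_or_eq_of_le (minIdx_le h hjl : _ ≤ l[j]) with h' | h'
  · exact h'
  · exfalso
    have : minIdx l ≤ j := indexOf_le_of_getElem hjl (by rw [← h', getElem_minIdx h])
    omega


lemma minIdx_unique {l : List ℕ} (h : l ≠ []) {i : ℕ} (hi : i < l.length)
    (h1 : ∀ j (hj : j < l.length), l[i] ≤ l[j])
    (h2 : ∀ j (hj : j < i), l[i] < l[j]'(hj.trans hi)) : i = minIdx l := by
  rcases lt_trichotomy i (minIdx l) with hlt | he | hgt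
  · exact absurd (h1 _ (minIdx_lt h)) (not_le.2 (minIdx_lt_getElem h hlt))
  · exact he
  · exact absurd (minIdx_le h hi) (not_le.2 (h2 _ hgt))

lemma shapeOfAux_nil (f : ℕ) : shapeOfAux f [] = Tree.nil := by
  cases f <;> simp [shapeOfAux]

lemma shapeOfList_nil : shapeOfList [] = Tree.nil := rfl

lemma shapeOfAux_congr : ∀ {f1 : ℕ} {l : List ℕ} {f2 : ℕ}, l.length ≤ f1 → l.length ≤ f2 →
    shapeOfAux f1 l = shapeOfAux f2 l := by
  intro f1
  induction f1 with
  | zero => intro l f2 h1 _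
            rw [List.length_eq_zero_iff.1 (Nat.le_zero.1 h1)]
            rw [shapeOfAux_nil, shapeOfAux_nil]
  | succ f ih =>
    intro l f2 h1 h2
    by_cases hl : l = []
    · rw [hl, shapeOfAux_nil, shapeOfAux_nil]
    · have hlen := minIdx_lt hl
      rcases f2 with _ | f2
      · exact absurd (Nat.le_zero.1 h2) (by intro h; exact hl (List.length_eq_zero_iff.1 h))
      · show shapeOfAux (f+1) l = shapeOfAux (f2+1) l
        rw [shapeOfAux, shapeOfAux, if_neg hl, if_neg hl]
        show Tree.node () (shapeOfAux f (l.take (minIdx l))) (shapeOfAux f (l.drop (minIdx l+1)))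
          = Tree.node () (shapeOfAux f2 (l.take (minIdx l))) (shapeOfAux f2 (l.drop (minIdx l+1)))
        have htake : (l.take (minIdx l)).length ≤ f := by
          simp only [List.length_take]
          unfold minIdx at hlen ⊢; omega
        have hdrop : (l.drop (minIdx l + 1)).length ≤ f := by
          simp only [List.length_drop]
          unfold minIdx at hlen ⊢; omega
        have htake2 : (l.take (minIdx l)).length ≤ f2 := by
          simp only [List.length_take]
          unfold minIdx at hlen ⊢; omega
        have hdrop2 : (l.drop (minIdx l + 1)).length ≤ f2 := by
          simp only [List.length_drop]
          unfold minIdx at hlen ⊢; omega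
        rw [ih htake htake2, ih hdrop hdrop2]

lemma shapeOfList_eq {l : List ℕ} (h : l ≠ []) :
    shapeOfList l = Tree.node () (shapeOfList (l.take (minIdx l)))
      (shapeOfList (l.drop (minIdx l + 1))) := by
  have hlen := minIdx_lt h
  rcases he : l.length with _ | n
  · exact absurd (List.length_eq_zero_iff.1 he) h
  · rw [shapeOfList, he, shapeOfAux, if_neg h]
    show Tree.node () (shapeOfAux n (l.take (minIdx l))) (shapeOfAux n (l.drop (minIdx l + 1))) = _
    rw [shapeOfList, shapeOfList]
    have e1 : shapeOfAux n (l.take (minIdx l))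
        = shapeOfAux (l.take (minIdx l)).length (l.take (minIdx l)) :=
      shapeOfAux_congr (by simp only [List.length_take]; omega) le_rfl
    have e2 : shapeOfAux n (l.drop (minIdx l + 1))
        = shapeOfAux (l.drop (minIdx l + 1)).length (l.drop (minIdx l + 1)) :=
      shapeOfAux_congr (by simp only [List.length_drop]; omega) le_rfl
    rw [e1, e2]

lemma numNodes_shapeOfList_aux : ∀ (n : ℕ) (l : List ℕ), l.length ≤ n →
    (shapeOfList l).numNodes = l.length := by
  intro n
  induction n with
  | zero => intro l h
            rw [List.length_eq_zero_iff.1 (Nat.le_zero.1 h)]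
            simp [shapeOfList, shapeOfAux_nil, Tree.numNodes]
  | succ n ih =>
    intro l h
    by_cases hl : l = []
    · subst hl; simp [shapeOfList, shapeOfAux_nil, Tree.numNodes]
    · have hlen := minIdx_lt hl
      rw [shapeOfList_eq hl]
      simp only [Tree.node, Tree.numNodes, BinaryTree.numNodes] at ih ⊢
      rw [ih _ (by simp only [List.length_take]; omega),
          ih _ (by simp only [List.length_drop]; omega)]
      simp only [List.length_take, List.length_drop]
      omega

lemma numNodes_shapeOfList (l : List ℕ) : (shapeOfList l).numNodes = l.length :=
  numNodes_shapeOfList_aux l.length l le_rfl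


section
variable {l w w' : List ℕ}

/-- two words are order-isomorphic -/
def WRel (w w' : List ℕ) : Prop :=
  w.length = w'.length ∧ ∀ i j, ∀ _ : i < w.length, ∀ _ : j < w.length,
    (w.getD i 0 < w.getD j 0 ↔ w'.getD i 0 < w'.getD j 0)

lemma WRel.ne_nil (h : WRel w w') (hw : w ≠ []) : w' ≠ [] := by
  intro hc
  rw [hc] at h
  exact hw (List.length_eq_zero_iff.1 (by simpa using h.1))

lemma WRel.lt_iff (h : WRel w w') {i j : ℕ} (hi : i < w.length) (hj : j < w.length)
    (hi' : i < w'.length) (hj' : j < w'.length) :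
    (w[i] < w[j] ↔ w'[i] < w'[j]) := by
  have := h.2 i j hi hj
  rwa [List.getD_eq_getElem _ _ hi, List.getD_eq_getElem _ _ hj,
    List.getD_eq_getElem _ _ hi', List.getD_eq_getElem _ _ hj'] at this

lemma WRel.minIdx_eq (h : WRel w w') (hw : w ≠ []) : minIdx w = minIdx w' := by
  have hw' := h.ne_nil hw
  have hlen := minIdx_lt hw
  have hlen' : minIdx w < w'.length := h.1 ▸ hlen
  refine minIdx_unique hw' hlen' ?_ ?_
  · intro j hj
    have hjw : j < w.length := h.1 ▸ hj
    by_contra hc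
    push_neg at hc
    exact absurd ((h.lt_iff hjw hlen hj hlen').2 hc) (not_lt.2 (minIdx_le hw hjw))
  · intro j hj
    exact (h.lt_iff hlen (hj.trans hlen) hlen' (hj.trans hlen')).1 (minIdx_lt_getElem hw hj)

lemma WRel.take (h : WRel w w') (k : ℕ) : WRel (w.take k) (w'.take k) := by
  constructor
  · simp [List.length_take, h.1]
  · intro i j hi hj
    simp only [List.length_take] at hi hj
    have hlen := h.1
    have hi1 : i < w.length := lt_of_lt_of_le hi (min_le_right _ _)
    have hj1 : j < w.length := lt_of_lt_of_le hj (min_le_right _ _)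
    have hi2 : i < (w.take k).length := by simp only [List.length_take]; omega
    have hj2 : j < (w.take k).length := by simp only [List.length_take]; omega
    have hi3 : i < (w'.take k).length := by simp only [List.length_take]; omega
    have hj3 : j < (w'.take k).length := by simp only [List.length_take]; omega
    rw [List.getD_eq_getElem _ _ hi2, List.getD_eq_getElem _ _ hj2,
      List.getD_eq_getElem _ _ hi3, List.getD_eq_getElem _ _ hj3,
      List.getElem_take, List.getElem_take, List.getElem_take, List.getElem_take]
    exact h.lt_iff hi1 hj1 (by omega) (by omega)

lemma WRel.drop (h : WRel w w') (k : ℕ) : WRel (w.drop k) (w'.drop k) := by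
  constructor
  · simp [List.length_drop, h.1]
  · intro i j hi hj
    simp only [List.length_drop] at hi hj
    have hlen := h.1
    have hi2 : i < (w.drop k).length := by simp only [List.length_drop]; omega
    have hj2 : j < (w.drop k).length := by simp only [List.length_drop]; omega
    have hi3 : i < (w'.drop k).length := by simp only [List.length_drop]; omega
    have hj3 : j < (w'.drop k).length := by simp only [List.length_drop]; omega
    rw [List.getD_eq_getElem _ _ hi2, List.getD_eq_getElem _ _ hj2,
      List.getD_eq_getElem _ _ hi3, List.getD_eq_getElem _ _ hj3,
      List.getElem_drop, List.getElem_drop, List.getElem_drop, List.getElem_drop]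
    exact h.lt_iff (by omega) (by omega) (by omega) (by omega)

lemma shape_congr_aux : ∀ (n : ℕ) (w w' : List ℕ), w.length ≤ n → WRel w w' →
    shapeOfList w = shapeOfList w' := by
  intro n
  induction n with
  | zero =>
    intro w w' h hrel
    have hw : w = [] := List.length_eq_zero_iff.1 (Nat.le_zero.1 h)
    have hw' : w' = [] := List.length_eq_zero_iff.1 (by rw [← hrel.1, hw]; rfl)
    rw [hw, hw']
  | succ n ih =>
    intro w w' h hrel
    by_cases hw : w = []
    · have hw' : w' = [] := List.length_eq_zero_iff.1 (by rw [← hrel.1, hw]; rfl)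
      rw [hw, hw']
    · have hw' := hrel.ne_nil hw
      have hlen := minIdx_lt hw
      rw [shapeOfList_eq hw, shapeOfList_eq hw', ← hrel.minIdx_eq hw]
      rw [ih _ _ (by simp only [List.length_take]; omega) (hrel.take _),
        ih _ _ (by simp only [List.length_drop]; omega) (hrel.drop _)]

lemma shape_congr (h : WRel w w') : shapeOfList w = shapeOfList w' :=
  shape_congr_aux w.length w w' le_rfl h

end

def prefShape : ℕ → Tree Unit → Tree Unit
  | _, BinaryTree.nil => Tree.nil
  | k, BinaryTree.node _ L R =>
    if k ≤ L.numNodes then prefShape k L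
    else Tree.node () L (prefShape (k - L.numNodes - 1) R)

def sufShape : ℕ → Tree Unit → Tree Unit
  | _, BinaryTree.nil => Tree.nil
  | k, BinaryTree.node _ L R =>
    if k ≤ L.numNodes then Tree.node () (sufShape k L) R
    else sufShape (k - L.numNodes - 1) R

lemma shape_take_aux : ∀ (n : ℕ) (w : List ℕ), w.length ≤ n → ∀ k,
    shapeOfList (w.take k) = prefShape k (shapeOfList w) := by
  intro n
  induction n with
  | zero =>
    intro w h k
    have hw : w = [] := List.length_eq_zero_iff.1 (Nat.le_zero.1 h)
    rw [hw]
    simp [shapeOfList_nil, prefShape]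
  | succ n ih =>
    intro w h k
    by_cases hw : w = []
    · rw [hw]; simp [shapeOfList_nil, prefShape]
    · have hlen := minIdx_lt hw
      set i := minIdx w with hi
      rw [shapeOfList_eq hw]
      have hL : (shapeOfList (w.take i)).numNodes = i := by
        rw [numNodes_shapeOfList, List.length_take]; omega
      simp only [Tree.numNodes] at hL
      by_cases hk : k ≤ i
      · rw [prefShape, if_pos (by rw [hL]; exact hk)]
        have h1 : w.take k = (w.take i).take k := by
          rw [List.take_take, min_eq_left hk]
        rw [h1, ih _ (by simp only [List.length_take]; omega) k]
      · push_neg at hk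
        have hne : w.take k ≠ [] := by
          intro hc
          have := congrArg List.length hc
          simp only [List.length_take, List.length_nil] at this
          omega
        have hmin : minIdx (w.take k) = i := by
          symm
          refine minIdx_unique hne (i := i) (by simp only [List.length_take]; omega) ?_ ?_
          · intro j hj
            simp only [List.length_take] at hj
            rw [List.getElem_take, List.getElem_take]
            exact minIdx_le hw (by omega)
          · intro j hj
            rw [List.getElem_take, List.getElem_take]
            exact minIdx_lt_getElem hw hj
        rw [shapeOfList_eq hne, hmin]
        have h1 : (w.take k).take i = w.take i := by
          rw [List.take_take, min_eq_left (le_of_lt hk)]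
        have h2 : (w.take k).drop (i + 1) = (w.drop (i + 1)).take (k - (i + 1)) := by
          rw [List.drop_take]
        rw [h1, h2, ih _ (by simp only [List.length_drop]; omega) (k - (i+1))]
        rw [prefShape, if_neg (by rw [hL]; omega), hL]
        rw [← hi, Nat.sub_sub]

lemma shape_drop_aux : ∀ (n : ℕ) (w : List ℕ), w.length ≤ n → ∀ k,
    shapeOfList (w.drop k) = sufShape k (shapeOfList w) := by
  intro n
  induction n with
  | zero =>
    intro w h k
    have hw : w = [] := List.length_eq_zero_iff.1 (Nat.le_zero.1 h)
    rw [hw]; simp [shapeOfList_nil, sufShape]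
  | succ n ih =>
    intro w h k
    by_cases hw : w = []
    · rw [hw]; simp [shapeOfList_nil, sufShape]
    · have hlen := minIdx_lt hw
      set i := minIdx w with hi
      rw [shapeOfList_eq hw]
      have hL : (shapeOfList (w.take i)).numNodes = i := by
        rw [numNodes_shapeOfList, List.length_take]; omega
      simp only [Tree.numNodes] at hL
      by_cases hk : k ≤ i
      · have hne : w.drop k ≠ [] := by
          intro hc
          have := congrArg List.length hc
          simp only [List.length_drop, List.length_nil] at this
          omega
        have hmin : minIdx (w.drop k) = i - k := by
          symm
          refine minIdx_unique hne (i := i - k) (by simp only [List.length_drop]; omega) ?_ ?_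
          · intro j hj
            simp only [List.length_drop] at hj
            rw [List.getElem_drop, List.getElem_drop]
            have : k + (i - k) = i := by omega
            simp only [this]
            exact minIdx_le hw (by omega)
          · intro j hj
            rw [List.getElem_drop, List.getElem_drop]
            have : k + (i - k) = i := by omega
            simp only [this]
            exact minIdx_lt_getElem hw (by omega)
        rw [shapeOfList_eq hne, hmin]
        have h1 : (w.drop k).take (i - k) = (w.take i).drop k := by
          rw [List.drop_take]
        have h2 : (w.drop k).drop (i - k + 1) = w.drop (i + 1) := by
          rw [List.drop_drop]
          congr 1
          omega
        rw [h1, h2, ih _ (by simp only [List.length_take]; omega) k]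
        rw [sufShape, if_pos (by rw [hL]; exact hk), ← hi]
      · push_neg at hk
        have h1 : w.drop k = (w.drop (i + 1)).drop (k - i - 1) := by
          rw [List.drop_drop]
          congr 1
          omega
        rw [h1, ih _ (by simp only [List.length_drop]; omega) (k - i - 1)]
        rw [sufShape, if_neg (by rw [hL]; omega), hL, ← hi]


lemma card_compl_eq {k l : ℕ} {A : Finset (Fin (k + l))} (hA : A.card = k) : (Aᶜ).card = l := by
  rw [Finset.card_compl, hA, Fintype.card_fin]; omega

lemma concatPerm_castAdd {k l : ℕ} (σ : Equiv.Perm (Fin k)) (τ : Equiv.Perm (Fin l))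
    (A : Finset (Fin (k + l))) (hA : A.card = k) (i : Fin k) :
    concatPerm σ τ A hA (Fin.castAdd l i) = (A.orderIsoOfFin hA (σ i) : Fin (k + l)) := by
  simp [concatPerm, finSumFinEquiv_symm_apply_castAdd]

lemma concatPerm_natAdd {k l : ℕ} (σ : Equiv.Perm (Fin k)) (τ : Equiv.Perm (Fin l))
    (A : Finset (Fin (k + l))) (hA : A.card = k) (i : Fin l) :
    concatPerm σ τ A hA (Fin.natAdd k i) = ((Aᶜ).orderIsoOfFin (card_compl_eq hA) (τ i) : Fin (k + l)) := by
  simp [concatPerm, finSumFinEquiv_symm_apply_natAdd]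

variable {k l : ℕ}

def stdA (π : Perm (Fin (k + l))) : Finset (Fin (k + l)) :=
  Finset.image (fun i : Fin k => π (Fin.castAdd l i)) Finset.univ

lemma castAdd_inj : Function.Injective (Fin.castAdd (n := k) l) := fun a b h => by
  simpa [Fin.ext_iff] using h

lemma stdA_card (π : Perm (Fin (k + l))) : (stdA π).card = k := by
  rw [stdA, Finset.card_image_of_injective _ (fun a b h => castAdd_inj (π.injective h))]
  simp

lemma mem_stdA (π : Perm (Fin (k + l))) (i : Fin k) : π (Fin.castAdd l i) ∈ stdA π :=
  Finset.mem_image.2 ⟨i, Finset.mem_univ _, rfl⟩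

lemma not_mem_stdA (π : Perm (Fin (k + l))) (i : Fin l) : π (Fin.natAdd k i) ∉ stdA π := by
  intro hc
  rcases Finset.mem_image.1 hc with ⟨j, -, hj⟩
  have := π.injective hj
  have := congrArg Fin.val this
  simp only [Fin.coe_castAdd, Fin.coe_natAdd] at this
  omega

noncomputable def stdSigma (π : Perm (Fin (k + l))) : Perm (Fin k) :=
  Equiv.ofBijective
    (fun i => ((stdA π).orderIsoOfFin (stdA_card π)).symm ⟨π (Fin.castAdd l i), mem_stdA π i⟩)
    (Finite.injective_iff_bijective.1 (fun a b h => by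
      have := congrArg ((stdA π).orderIsoOfFin (stdA_card π)) h
      simp only [OrderIso.apply_symm_apply, Subtype.mk.injEq] at this
      exact castAdd_inj (π.injective this)))

lemma stdSigma_spec (π : Perm (Fin (k + l))) (i : Fin k) :
    ((stdA π).orderIsoOfFin (stdA_card π) (stdSigma π i) : Fin (k + l)) = π (Fin.castAdd l i) := by
  simp [stdSigma, Equiv.ofBijective]

noncomputable def stdTau (π : Perm (Fin (k + l))) : Perm (Fin l) :=
  Equiv.ofBijective
    (fun i => ((stdA π)ᶜ.orderIsoOfFin (card_compl_eq (stdA_card π))).symm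
      ⟨π (Fin.natAdd k i), Finset.mem_compl.2 (not_mem_stdA π i)⟩)
    (Finite.injective_iff_bijective.1 (fun a b h => by
      have := congrArg ((stdA π)ᶜ.orderIsoOfFin (card_compl_eq (stdA_card π))) h
      simp only [OrderIso.apply_symm_apply, Subtype.mk.injEq] at this
      have h2 := π.injective this
      have h3 := congrArg Fin.val h2
      simp only [Fin.coe_natAdd] at h3
      exact Fin.ext (by omega)))

lemma stdTau_spec (π : Perm (Fin (k + l))) (i : Fin l) :
    (((stdA π)ᶜ).orderIsoOfFin (card_compl_eq (stdA_card π)) (stdTau π i) : Fin (k + l))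
      = π (Fin.natAdd k i) := by
  simp [stdTau, Equiv.ofBijective]

lemma concat_std (π : Perm (Fin (k + l))) :
    concatPerm (stdSigma π) (stdTau π) (stdA π) (stdA_card π) = π := by
  ext j
  induction j using Fin.addCases with
  | left i => rw [concatPerm_castAdd, stdSigma_spec]
  | right i => rw [concatPerm_natAdd, stdTau_spec]

lemma image_orderIsoOfFin {n m : ℕ} (A : Finset (Fin n)) (hA : A.card = m) (σ : Perm (Fin m)) :
    Finset.image (fun i => (A.orderIsoOfFin hA (σ i) : Fin n)) Finset.univ = A := by
  ext x
  simp only [Finset.mem_image, Finset.mem_univ, true_and]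
  constructor
  · rintro ⟨i, rfl⟩
    exact (A.orderIsoOfFin hA (σ i)).2
  · intro hx
    exact ⟨σ.symm ((A.orderIsoOfFin hA).symm ⟨x, hx⟩), by simp⟩

lemma concat_unique (σ : Perm (Fin k)) (τ : Perm (Fin l)) (A : Finset (Fin (k + l)))
    (hA : A.card = k) (π : Perm (Fin (k + l))) (h : concatPerm σ τ A hA = π) :
    A = stdA π ∧ σ = stdSigma π ∧ τ = stdTau π := by
  have hAeq : A = stdA π := by
    rw [← image_orderIsoOfFin A hA σ, stdA]
    congr 1
    ext i
    rw [← concatPerm_castAdd σ τ A hA i, h]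
  subst hAeq
  have hσ : σ = stdSigma π := by
    apply Equiv.ext
    intro i
    have h1 : ((stdA π).orderIsoOfFin hA (σ i) : Fin (k + l)) = π (Fin.castAdd l i) := by
      rw [← concatPerm_castAdd σ τ _ hA i, h]
    have h2 : ((stdA π).orderIsoOfFin (stdA_card π) (σ i) : Fin (k + l))
        = ((stdA π).orderIsoOfFin (stdA_card π) (stdSigma π i) : Fin (k + l)) :=
      h1.trans (stdSigma_spec π i).symm
    exact ((stdA π).orderIsoOfFin (stdA_card π)).injective (Subtype.coe_injective h2)
  refine ⟨rfl, hσ, ?_⟩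
  apply Equiv.ext
  intro i
  have h1 : (((stdA π)ᶜ).orderIsoOfFin (card_compl_eq (stdA_card π)) (τ i) : Fin (k + l))
      = π (Fin.natAdd k i) := by
    rw [← concatPerm_natAdd σ τ _ hA i, h]
  have h2 : (((stdA π)ᶜ).orderIsoOfFin (card_compl_eq (stdA_card π)) (τ i) : Fin (k + l))
      = (((stdA π)ᶜ).orderIsoOfFin (card_compl_eq (stdA_card π)) (stdTau π i) : Fin (k + l)) :=
    h1.trans (stdTau_spec π i).symm
  exact (((stdA π)ᶜ).orderIsoOfFin (card_compl_eq (stdA_card π))).injective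
    (Subtype.coe_injective h2)


end LodayRoncoAux

section LodayRoncoMain

open Equiv

variable {k l : ℕ}

lemma psi_def {n : ℕ} (π : Perm (Fin n)) :
    Psi π = shapeOfList (List.ofFn fun i => (π i : ℕ)) := rfl

lemma word_split (π : Perm (Fin (k + l))) :
    (List.ofFn fun j : Fin (k + l) => (π j : ℕ))
      = (List.ofFn fun i : Fin k => (π (Fin.castAdd l i) : ℕ))
        ++ (List.ofFn fun i : Fin l => (π (Fin.natAdd k i) : ℕ)) :=
  List.ofFn_add

lemma word_take (π : Perm (Fin (k + l))) :
    (List.ofFn fun j : Fin (k + l) => (π j : ℕ)).take k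
      = List.ofFn fun i : Fin k => (π (Fin.castAdd l i) : ℕ) := by
  rw [word_split, List.take_left' (by simp)]

lemma word_drop (π : Perm (Fin (k + l))) :
    (List.ofFn fun j : Fin (k + l) => (π j : ℕ)).drop k
      = List.ofFn fun i : Fin l => (π (Fin.natAdd k i) : ℕ) := by
  rw [word_split, List.drop_left' (by simp)]

lemma wrel_ofFn {m : ℕ} {f g : Fin m → ℕ} (h : ∀ i j, f i < f j ↔ g i < g j) :
    WRel (List.ofFn f) (List.ofFn g) := by
  refine ⟨by simp, ?_⟩
  intro i j hi hj
  simp only [List.length_ofFn] at hi hj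
  have hi1 : i < (List.ofFn f).length := by simp [hi]
  have hj1 : j < (List.ofFn f).length := by simp [hj]
  have hi2 : i < (List.ofFn g).length := by simp [hi]
  have hj2 : j < (List.ofFn g).length := by simp [hj]
  rw [List.getD_eq_getElem _ _ hi1, List.getD_eq_getElem _ _ hj1,
    List.getD_eq_getElem _ _ hi2, List.getD_eq_getElem _ _ hj2,
    List.getElem_ofFn, List.getElem_ofFn, List.getElem_ofFn, List.getElem_ofFn]
  exact h _ _

lemma psi_stdSigma (π : Perm (Fin (k + l))) : Psi (stdSigma π) = prefShape k (Psi π) := by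
  rw [psi_def, psi_def π, ← shape_take_aux (k + l) _ (by simp) k, word_take]
  refine shape_congr (wrel_ofFn ?_)
  intro i j
  rw [← stdSigma_spec π i, ← stdSigma_spec π j]
  simp [Fin.val_fin_lt, Subtype.coe_lt_coe, OrderIso.lt_iff_lt]

lemma psi_stdTau (π : Perm (Fin (k + l))) : Psi (stdTau π) = sufShape k (Psi π) := by
  rw [psi_def, psi_def π, ← shape_drop_aux (k + l) _ (by simp) k, word_drop]
  refine shape_congr (wrel_ofFn ?_)
  intro i j
  rw [← stdTau_spec π i, ← stdTau_spec π j]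
  simp [Fin.val_fin_lt, Subtype.coe_lt_coe, OrderIso.lt_iff_lt]

lemma count_psiStar {n : ℕ} (T : Tree Unit) (π : Perm (Fin n)) :
    Multiset.count π (PsiStar n T) = if Psi π = T then 1 else 0 := by
  rw [PsiStar, Multiset.count_eq_of_nodup (Finset.nodup _)]
  simp [Finset.mem_filter]

lemma count_mrProd (σ : Perm (Fin k)) (τ : Perm (Fin l)) (π : Perm (Fin (k + l))) :
    Multiset.count π (mrProd σ τ) = if stdSigma π = σ ∧ stdTau π = τ then 1 else 0 := by
  rw [mrProd, Multiset.count_eq_of_nodup]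
  · congr 1
    simp only [Multiset.mem_map, Finset.mem_val, Finset.mem_attach, true_and, eq_iff_iff]
    constructor
    · rintro ⟨⟨A, hA⟩, h⟩
      have hcard : A.card = k := by simp only [Finset.mem_filter] at hA; exact hA.2
      obtain ⟨-, h1, h2⟩ := concat_unique σ τ A hcard π h
      exact ⟨h1.symm, h2.symm⟩
    · rintro ⟨h1, h2⟩
      refine ⟨⟨stdA π, ?_⟩, ?_⟩
      · simp [Finset.mem_filter, stdA_card]
      · rw [← h1, ← h2]
        exact concat_std π
  · refine Multiset.Nodup.map ?_ (Finset.nodup _)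
    rintro ⟨A, hA⟩ ⟨A', hA'⟩ h
    have hcard : A.card = k := by simp only [Finset.mem_filter] at hA; exact hA.2
    have hcard' : A'.card = k := by simp only [Finset.mem_filter] at hA'; exact hA'.2
    have e1 := (concat_unique σ τ A hcard _ rfl).1
    have e2 := (concat_unique σ τ A' hcard' _ h.symm).1
    exact Subtype.ext (e1.trans e2.symm)

lemma count_mrProdSum (T₁ T₂ : Tree Unit) (π : Perm (Fin (k + l))) :
    Multiset.count π (mrProdSum (PsiStar k T₁) (PsiStar l T₂))
      = if Psi (stdSigma π) = T₁ ∧ Psi (stdTau π) = T₂ then 1 else 0 := by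
  rw [mrProdSum, PsiStar, PsiStar, Multiset.count_bind]
  have e1 : ∀ σ : Perm (Fin k),
      Multiset.count π (Multiset.bind (Finset.univ.filter fun τ : Perm (Fin l) => Psi τ = T₂).val
        fun τ => mrProd σ τ)
      = if stdSigma π = σ ∧ Psi (stdTau π) = T₂ then 1 else 0 := by
    intro σ
    rw [Multiset.count_bind]
    have : ∀ τ : Perm (Fin l), Multiset.count π (mrProd σ τ)
        = if stdSigma π = σ ∧ stdTau π = τ then 1 else 0 := fun τ => count_mrProd σ τ π
    calc (Multiset.map (fun τ => Multiset.count π (mrProd σ τ))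
            (Finset.univ.filter fun τ : Perm (Fin l) => Psi τ = T₂).val).sum
        = ∑ τ ∈ (Finset.univ.filter fun τ : Perm (Fin l) => Psi τ = T₂),
            if stdSigma π = σ ∧ stdTau π = τ then 1 else 0 := by
          rw [Finset.sum]
          congr 1
          exact Multiset.map_congr rfl fun τ _ => this τ
      _ = ∑ τ ∈ (Finset.univ.filter fun τ : Perm (Fin l) => Psi τ = T₂),
            if stdSigma π = σ then (if stdTau π = τ then 1 else 0) else 0 := by
          refine Finset.sum_congr rfl fun τ _ => ?_
          by_cases h1 : stdSigma π = σ <;> by_cases h2 : stdTau π = τ <;> simp [h1, h2]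
      _ = if stdSigma π = σ then
            (∑ τ ∈ (Finset.univ.filter fun τ : Perm (Fin l) => Psi τ = T₂),
              if stdTau π = τ then 1 else 0) else 0 := by
          by_cases h1 : stdSigma π = σ <;> simp [h1]
      _ = if stdSigma π = σ ∧ Psi (stdTau π) = T₂ then 1 else 0 := by
          rw [Finset.sum_ite_eq]
          by_cases h1 : stdSigma π = σ <;> by_cases h2 : Psi (stdTau π) = T₂ <;>
            simp [h1, h2, Finset.mem_filter]
  calc (Multiset.map (fun σ => Multiset.count π
          (Multiset.bind (Finset.univ.filter fun τ : Perm (Fin l) => Psi τ = T₂).val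
            fun τ => mrProd σ τ))
          (Finset.univ.filter fun σ : Perm (Fin k) => Psi σ = T₁).val).sum
      = ∑ σ ∈ (Finset.univ.filter fun σ : Perm (Fin k) => Psi σ = T₁),
          if stdSigma π = σ ∧ Psi (stdTau π) = T₂ then 1 else 0 := by
        rw [Finset.sum]
        congr 1
        exact Multiset.map_congr rfl fun σ _ => e1 σ
    _ = ∑ σ ∈ (Finset.univ.filter fun σ : Perm (Fin k) => Psi σ = T₁),
          if stdSigma π = σ then (if Psi (stdTau π) = T₂ then 1 else 0) else 0 := by
        refine Finset.sum_congr rfl fun σ _ => ?_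
        by_cases h1 : stdSigma π = σ <;> by_cases h2 : Psi (stdTau π) = T₂ <;> simp [h1, h2]
    _ = if Psi (stdSigma π) = T₁ ∧ Psi (stdTau π) = T₂ then 1 else 0 := by
        rw [Finset.sum_ite_eq]
        by_cases h1 : Psi (stdSigma π) = T₁ <;> by_cases h2 : Psi (stdTau π) = T₂ <;>
          simp [h1, h2, Finset.mem_filter]

end LodayRoncoMain

/-- The image of `Ψ*` is closed under the Malvenuto–Reutenauer product: for binary trees
`T₁ ∈ Y_k` and `T₂ ∈ Y_l`, the product `Ψ*(T₁) * Ψ*(T₂)` is a sum of elements `Ψ*(T)`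
over a multiset `M` of trees `T ∈ Y_{k+l}`. -/
theorem psiStar_mul_closed {k l : ℕ} (T₁ T₂ : Tree Unit)
    (h₁ : T₁.numNodes = k) (h₂ : T₂.numNodes = l) :
    ∃ M : Multiset (Tree Unit), (∀ T ∈ M, T.numNodes = k + l) ∧
      mrProdSum (PsiStar k T₁) (PsiStar l T₂) = M.bind fun T => PsiStar (k + l) T := by
  classical
  set S : Finset (Equiv.Perm (Fin (k + l))) :=
    Finset.univ.filter (fun π : Equiv.Perm (Fin (k + l)) =>
      Psi (stdSigma π) = T₁ ∧ Psi (stdTau π) = T₂) with hS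
  refine ⟨(S.image Psi).val, ?_, ?_⟩
  · intro T hT
    rw [Finset.mem_val, Finset.mem_image] at hT
    obtain ⟨π, -, rfl⟩ := hT
    rw [psi_def, numNodes_shapeOfList]
    simp
  · refine Multiset.ext.2 fun π => ?_
    rw [count_mrProdSum, Multiset.count_bind]
    have : ∀ T : Tree Unit, Multiset.count π (PsiStar (k + l) T)
        = if Psi π = T then 1 else 0 := fun T => count_psiStar T π
    calc (if Psi (stdSigma π) = T₁ ∧ Psi (stdTau π) = T₂ then 1 else 0)
        = if Psi π ∈ S.image Psi then 1 else 0 := by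
          congr 1
          rw [eq_iff_iff, Finset.mem_image]
          constructor
          · intro h
            exact ⟨π, by simp [hS, Finset.mem_filter, h], rfl⟩
          · rintro ⟨π', hπ', hpp⟩
            rw [hS, Finset.mem_filter] at hπ'
            obtain ⟨-, h1, h2⟩ := hπ'
            rw [psi_stdSigma, psi_stdTau, ← hpp]
            rw [psi_stdSigma] at h1
            rw [psi_stdTau] at h2
            exact ⟨h1, h2⟩
      _ = ∑ T ∈ S.image Psi, if Psi π = T then 1 else 0 := by
          rw [Finset.sum_ite_eq]
      _ = (Multiset.map (fun T => Multiset.count π (PsiStar (k + l) T)) (S.image Psi).val).sum := by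
          rw [Finset.sum]
          congr 1
          exact (Multiset.map_congr rfl fun T _ => this T).symm
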